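/- arXiv:1005.0810 — 3 statements merged into one kernel-verified Lean document; each statement's English description precedes it below -/
import Mathlib

section
/- Let w be a nonnegative real random variable and let C > 0 be such that lim_{x→∞} x² P(w > x) = C (tail exponent α = 3). Then for every δ > 0 there is a unique σ(δ) > 0 with δ·E[w²/(1+σ(δ)w)] = 1, and lim_{δ→0⁺} δ · log σ(δ) = −1/(2C). -/
open MeasureTheory Filter Real Set
open scoped Topology

set_option linter.unusedSectionVars false

namespace CritExp

variable {Ω : Type*} [MeasurableSpace Ω]

/-- tail function -/
noncomputable def G (μ : Measure Ω) (w : Ω → ℝ) (x : ℝ) : ℝ :=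
  (μ {ω | x < w ω}).toReal

variable (μ : Measure Ω) [IsProbabilityMeasure μ] (w : Ω → ℝ)

lemma G_nonneg (x : ℝ) : 0 ≤ G μ w x := ENNReal.toReal_nonneg

lemma G_anti : Antitone (G μ w) := by
  intro a b hab
  exact ENNReal.toReal_mono (measure_ne_top _ _)
    (measure_mono (fun ω h => lt_of_le_of_lt hab h))

lemma G_le_one (x : ℝ) : G μ w x ≤ 1 := by
  have := prob_le_one (μ := μ) (s := {ω | x < w ω})
  simpa [G] using ENNReal.toReal_mono (by simp) this

lemma G_measurable : Measurable (G μ w) := (G_anti μ w).measurable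

lemma meas_eq_ofReal_G (x : ℝ) :
    μ {ω | x < w ω} = ENNReal.ofReal (G μ w x) := by
  rw [G, ENNReal.ofReal_toReal (measure_ne_top _ _)]


section Tail

variable {C : ℝ}
variable (htail : Tendsto (fun x : ℝ => x ^ 2 * (μ {ω | x < w ω}).toReal) atTop (𝓝 C))

include htail in
/-- tail bounds from the limit -/
lemma tail_bounds {ε : ℝ} (hε : 0 < ε) :
    ∃ x₀ : ℝ, 1 ≤ x₀ ∧ ∀ x, x₀ ≤ x → C - ε ≤ x ^ 2 * G μ w x ∧ x ^ 2 * G μ w x ≤ C + ε := by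
  have h := htail.eventually (Metric.ball_mem_nhds C hε)
  rw [eventually_atTop] at h
  obtain ⟨x₁, hx₁⟩ := h
  refine ⟨max x₁ 1, le_max_right _ _, fun x hx => ?_⟩
  have := hx₁ x (le_trans (le_max_left _ _) hx)
  rw [Real.dist_eq, abs_lt] at this
  unfold G
  constructor <;> [linarith [this.1]; linarith [this.2]]

include htail in
lemma G_upper (hC : 0 < C) :
    ∃ x₀ : ℝ, 1 ≤ x₀ ∧ ∀ x, x₀ ≤ x → G μ w x ≤ 2 * C / x ^ 2 := by
  obtain ⟨x₀, hx₀1, hx₀⟩ := tail_bounds μ w htail hC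
  refine ⟨x₀, hx₀1, fun x hx => ?_⟩
  have hxpos : (0:ℝ) < x := lt_of_lt_of_le (by linarith) hx
  have h := (hx₀ x hx).2
  rw [le_div_iff₀ (by positivity)]
  nlinarith [sq_nonneg x]

variable (hw_meas : Measurable w) (hw_nonneg : ∀ ω, 0 ≤ w ω)

lemma rpow_neg_two {t : ℝ} (ht : 0 < t) : t ^ (-2:ℝ) = 1 / t ^ 2 := by
  rw [Real.rpow_neg ht.le, show ((2:ℝ)) = ((2:ℕ):ℝ) by norm_num, Real.rpow_natCast,
    one_div]

include htail hw_meas hw_nonneg in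
lemma integrable_w (hC : 0 < C) : Integrable w μ := by
  obtain ⟨x₀, hx₀1, hbd⟩ := G_upper μ w htail hC
  have hx₀pos : (0:ℝ) < x₀ := by linarith
  refine ⟨hw_meas.aestronglyMeasurable, ?_⟩
  rw [hasFiniteIntegral_iff_ofReal (Eventually.of_forall hw_nonneg)]
  rw [lintegral_eq_lintegral_meas_lt μ (Eventually.of_forall hw_nonneg) hw_meas.aemeasurable]
  rw [← Set.Ioc_union_Ioi_eq_Ioi hx₀pos.le,
    lintegral_union measurableSet_Ioi (Set.Ioc_disjoint_Ioi le_rfl)]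
  have h1 : ∫⁻ t in Set.Ioc (0:ℝ) x₀, μ {a | t < w a} < ⊤ := by
    calc ∫⁻ t in Set.Ioc (0:ℝ) x₀, μ {a | t < w a}
        ≤ ∫⁻ _ in Set.Ioc (0:ℝ) x₀, 1 := lintegral_mono (fun t => prob_le_one)
      _ < ⊤ := by simp [lt_top_iff_ne_top]
  have h2 : ∫⁻ t in Set.Ioi x₀, μ {a | t < w a} < ⊤ := by
    have hint : IntegrableOn (fun t : ℝ => 2 * C * t ^ (-2:ℝ)) (Set.Ioi x₀) := by
      exact (integrableOn_Ioi_rpow_of_lt (by norm_num) hx₀pos).const_mul _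
    calc ∫⁻ t in Set.Ioi x₀, μ {a | t < w a}
        ≤ ∫⁻ t in Set.Ioi x₀, ENNReal.ofReal (2 * C * t ^ (-2:ℝ)) := by
          apply setLIntegral_mono (by fun_prop) (fun t ht => ?_)
          rw [meas_eq_ofReal_G]
          apply ENNReal.ofReal_le_ofReal
          rw [rpow_neg_two (lt_trans hx₀pos ht)]
          calc G μ w t ≤ 2 * C / t ^ 2 := hbd t (le_of_lt ht)
            _ = 2 * C * (1 / t ^ 2) := by ring
      _ < ⊤ := hint.lintegral_lt_top
  exact ENNReal.add_lt_top.mpr ⟨h1, h2⟩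

include hw_meas hw_nonneg in
lemma integrable_min_sq {M : ℝ} (hM : 0 ≤ M) :
    Integrable (fun ω => (min (w ω) M) ^ 2) μ := by
  refine Integrable.mono' (integrable_const (M ^ 2))
    (((hw_meas.min measurable_const).pow_const 2).aestronglyMeasurable)
    (Eventually.of_forall fun ω => ?_)
  have h0 : 0 ≤ min (w ω) M := le_min (hw_nonneg ω) hM
  rw [Real.norm_eq_abs, abs_of_nonneg (by positivity)]
  exact pow_le_pow_left₀ h0 (min_le_right _ _) 2

include hw_meas hw_nonneg in
lemma Tm_eq {M : ℝ} (hM : 0 < M) :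
    ∫ ω, (min (w ω) M) ^ 2 ∂μ = ∫ t in Set.Ioc 0 (M ^ 2), G μ w (Real.sqrt t) := by
  rw [(integrable_min_sq μ w hw_meas hw_nonneg hM.le).integral_eq_integral_meas_lt
    (Eventually.of_forall fun ω => by positivity)]
  have key : Set.EqOn (fun t => (μ {a | t < (min (w a) M) ^ 2}).toReal)
      ((Set.Ioo 0 (M ^ 2)).indicator (fun t => G μ w (Real.sqrt t))) (Set.Ioi 0) := by
    intro t ht
    simp only [Set.mem_Ioi] at ht
    by_cases ht2 : t < M ^ 2
    · rw [Set.indicator_of_mem (by exact ⟨ht, ht2⟩)]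
      have hsM : Real.sqrt t < M := (Real.sqrt_lt' hM).mpr ht2
      have hset : {a | t < (min (w a) M) ^ 2} = {a | Real.sqrt t < w a} := by
        ext a
        have h0 : 0 ≤ min (w a) M := le_min (hw_nonneg a) hM.le
        simp only [Set.mem_setOf_eq]
        rcases eq_or_lt_of_le h0 with h|h
        · constructor
          · intro hlt; rw [← h] at hlt; simp at hlt; linarith
          · intro hlt
            exfalso
            have := Real.sqrt_nonneg t
            have : Real.sqrt t < M := hsM
            have hwa : Real.sqrt t < w a := hlt
            have : Real.sqrt t < min (w a) M := lt_min hwa hsM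
            rw [← h] at this
            linarith [Real.sqrt_nonneg t]
        · rw [← Real.sqrt_lt' h, lt_min_iff]
          constructor
          · intro h'; exact h'.1
          · intro h'; exact ⟨h', hsM⟩
      dsimp only; rw [hset]; rfl
    · rw [Set.indicator_of_notMem (by simp [Set.mem_Ioo]; intro _; linarith)]
      have hset : {a | t < (min (w a) M) ^ 2} = (∅ : Set Ω) := by
        ext a
        have h0 : 0 ≤ min (w a) M := le_min (hw_nonneg a) hM.le
        simp only [Set.mem_setOf_eq, Set.mem_empty_iff_false, iff_false, not_lt]
        calc (min (w a) M) ^ 2 ≤ M ^ 2 := pow_le_pow_left₀ h0 (min_le_right _ _) 2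
          _ ≤ t := le_of_not_gt ht2
      dsimp only; rw [hset]; simp
  simp only [measureReal_def]
  rw [setIntegral_congr_fun measurableSet_Ioi key,
    setIntegral_indicator measurableSet_Ioo,
    Set.inter_eq_right.mpr Set.Ioo_subset_Ioi_self, ← integral_Ioc_eq_integral_Ioo]

lemma intervalIntegrable_G_sqrt (a b : ℝ) :
    IntervalIntegrable (fun t => G μ w (Real.sqrt t)) volume a b := by
  have key : ∀ u v : ℝ, IntegrableOn (fun t => G μ w (Real.sqrt t)) (Set.Ioc u v) volume := by
    intro u v
    refine Integrable.mono' (g := fun _ => (1:ℝ))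
      (integrableOn_const measure_Ioc_lt_top.ne)
      (((G_measurable μ w).comp Real.continuous_sqrt.measurable).aestronglyMeasurable.restrict)
      (Eventually.of_forall fun t => ?_)
    rw [Real.norm_eq_abs, abs_of_nonneg (G_nonneg μ w _)]
    exact G_le_one μ w _
  exact ⟨key _ _, key _ _⟩

include htail in
lemma Tm_bounds {ε : ℝ} (hε : 0 < ε) :
    ∃ x₀ : ℝ, 1 ≤ x₀ ∧ ∀ M, x₀ ≤ M →
      (C - ε) * (2 * Real.log M - 2 * Real.log x₀) ≤ ∫ t in Set.Ioc 0 (M^2), G μ w (Real.sqrt t) ∧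
      (∫ t in Set.Ioc 0 (M^2), G μ w (Real.sqrt t)) ≤
        x₀ ^ 2 + (C + ε) * (2 * Real.log M - 2 * Real.log x₀) := by
  obtain ⟨x₀, hx₀1, hbd⟩ := tail_bounds μ w htail hε
  have hx₀pos : (0:ℝ) < x₀ := by linarith
  refine ⟨x₀, hx₀1, fun M hM => ?_⟩
  have hMpos : (0:ℝ) < M := lt_of_lt_of_le hx₀pos hM
  have hsq : x₀ ^ 2 ≤ M ^ 2 := by nlinarith
  have hIoc : ∫ t in Set.Ioc (0:ℝ) (M^2), G μ w (Real.sqrt t)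
      = (∫ t in (0:ℝ)..(x₀^2), G μ w (Real.sqrt t))
        + ∫ t in (x₀^2)..(M^2), G μ w (Real.sqrt t) := by
    rw [intervalIntegral.integral_add_adjacent_intervals
      (intervalIntegrable_G_sqrt μ w _ _) (intervalIntegrable_G_sqrt μ w _ _),
      intervalIntegral.integral_of_le (by positivity)]
  have hzero_not : (0:ℝ) ∉ Set.uIcc (x₀^2) (M^2) := by
    rw [Set.uIcc_of_le hsq]
    intro h
    exact absurd h.1 (not_le.mpr (by positivity))
  have hpos_of_mem : ∀ t ∈ Set.uIcc (x₀^2) (M^2), t ≠ 0 := by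
    intro t ht h0
    rw [h0] at ht
    exact hzero_not ht
  have hcont_up : IntervalIntegrable (fun t : ℝ => (C + ε) / t) volume (x₀^2) (M^2) :=
    (continuousOn_const.div continuousOn_id hpos_of_mem).intervalIntegrable
  have hcont_lo : IntervalIntegrable (fun t : ℝ => (C - ε) / t) volume (x₀^2) (M^2) :=
    (continuousOn_const.div continuousOn_id hpos_of_mem).intervalIntegrable
  have hlog : ∀ c : ℝ, ∫ t in (x₀^2)..(M^2), c / t = c * (2 * Real.log M - 2 * Real.log x₀) := by
    intro c
    have : (fun t : ℝ => c / t) = fun t : ℝ => c * (1 / t) := by funext t; ring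
    rw [this, intervalIntegral.integral_const_mul, integral_one_div hzero_not,
      Real.log_div (by positivity) (by positivity), Real.log_pow, Real.log_pow]
    push_cast
    ring
  have hmem_bd : ∀ t ∈ Set.Icc (x₀^2) (M^2),
      (C - ε) / t ≤ G μ w (Real.sqrt t) ∧ G μ w (Real.sqrt t) ≤ (C + ε) / t := by
    intro t ht
    have htpos : 0 < t := lt_of_lt_of_le (by positivity) ht.1
    have hsqrt : x₀ ≤ Real.sqrt t := by
      rw [show x₀ = Real.sqrt (x₀^2) by rw [Real.sqrt_sq hx₀pos.le]]
      exact Real.sqrt_le_sqrt ht.1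
    have := hbd (Real.sqrt t) hsqrt
    rw [Real.sq_sqrt htpos.le] at this
    constructor
    · rw [div_le_iff₀ htpos]; linarith [this.1]
    · rw [le_div_iff₀ htpos]; linarith [this.2]
  have h2lo : (C - ε) * (2 * Real.log M - 2 * Real.log x₀)
      ≤ ∫ t in (x₀^2)..(M^2), G μ w (Real.sqrt t) := by
    rw [← hlog (C - ε)]
    exact intervalIntegral.integral_mono_on hsq hcont_lo (intervalIntegrable_G_sqrt μ w _ _)
      (fun t ht => (hmem_bd t ht).1)
  have h2up : (∫ t in (x₀^2)..(M^2), G μ w (Real.sqrt t))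
      ≤ (C + ε) * (2 * Real.log M - 2 * Real.log x₀) := by
    rw [← hlog (C + ε)]
    exact intervalIntegral.integral_mono_on hsq (intervalIntegrable_G_sqrt μ w _ _) hcont_up
      (fun t ht => (hmem_bd t ht).2)
  have h1lo : 0 ≤ ∫ t in (0:ℝ)..(x₀^2), G μ w (Real.sqrt t) :=
    intervalIntegral.integral_nonneg (by positivity) (fun t _ => G_nonneg μ w _)
  have h1up : (∫ t in (0:ℝ)..(x₀^2), G μ w (Real.sqrt t)) ≤ x₀ ^ 2 := by
    have := intervalIntegral.integral_mono_on (a := (0:ℝ)) (b := x₀^2) (by positivity)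
      (intervalIntegrable_G_sqrt μ w _ _) intervalIntegrable_const
      (fun t _ => G_le_one μ w (Real.sqrt t))
    simpa using this
  rw [hIoc]
  constructor <;> linarith

include hw_nonneg in
lemma fs_nonneg (σ : ℝ) (hσ : 0 ≤ σ) (ω : Ω) : 0 ≤ (w ω) ^ 2 / (1 + σ * w ω) := by
  have h := hw_nonneg ω
  have : 0 ≤ σ * w ω := mul_nonneg hσ h
  positivity

include hw_nonneg in
lemma fs_le {σ : ℝ} (hσ : 0 < σ) (ω : Ω) : (w ω) ^ 2 / (1 + σ * w ω) ≤ w ω / σ := by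
  have h := hw_nonneg ω
  have hd : (0:ℝ) < 1 + σ * w ω := by positivity
  rw [div_le_div_iff₀ hd hσ]
  nlinarith

include hw_meas hw_nonneg htail in
lemma integrable_fs (hC : 0 < C) {σ : ℝ} (hσ : 0 < σ) :
    Integrable (fun ω => (w ω) ^ 2 / (1 + σ * w ω)) μ := by
  refine Integrable.mono' ((integrable_w μ w htail hw_meas hw_nonneg hC).div_const σ)
    ((hw_meas.pow_const 2).div
      (measurable_const.add (measurable_const.mul hw_meas))).aestronglyMeasurable
    (Eventually.of_forall fun ω => ?_)
  rw [Real.norm_eq_abs, abs_of_nonneg (fs_nonneg w hw_nonneg σ hσ.le ω)]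
  exact fs_le w hw_nonneg hσ ω

include hw_meas hw_nonneg htail in
lemma F_strict_anti (hC : 0 < C) {σ₁ σ₂ : ℝ} (h1 : 0 < σ₁) (h12 : σ₁ < σ₂) :
    (∫ ω, (w ω) ^ 2 / (1 + σ₂ * w ω) ∂μ) < ∫ ω, (w ω) ^ 2 / (1 + σ₁ * w ω) ∂μ := by
  have h2 : 0 < σ₂ := h1.trans h12
  obtain ⟨x₀, hx₀1, hbd⟩ := tail_bounds μ w htail (half_pos hC)
  set d : Ω → ℝ := fun ω => (w ω) ^ 2 / (1 + σ₁ * w ω) - (w ω) ^ 2 / (1 + σ₂ * w ω) with hd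
  have hint1 := integrable_fs μ w htail hw_meas hw_nonneg hC h1
  have hint2 := integrable_fs μ w htail hw_meas hw_nonneg hC h2
  have hd_nonneg : ∀ ω, 0 ≤ d ω := by
    intro ω
    have h := hw_nonneg ω
    have hda : (0:ℝ) < 1 + σ₁ * w ω := by positivity
    have hdb : (0:ℝ) < 1 + σ₂ * w ω := by positivity
    have : (w ω) ^ 2 / (1 + σ₂ * w ω) ≤ (w ω) ^ 2 / (1 + σ₁ * w ω) := by
      apply div_le_div_of_nonneg_left (by positivity) hda
      nlinarith
    simpa [hd] using this
  have hpos : 0 < ∫ ω, d ω ∂μ := by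
    rw [integral_pos_iff_support_of_nonneg hd_nonneg (hint1.sub hint2)]
    have hsub : {ω | x₀ < w ω} ⊆ Function.support d := by
      intro ω hω
      simp only [Set.mem_setOf_eq] at hω
      have hwpos : 0 < w ω := lt_of_lt_of_le (by linarith) hω.le
      have hda : (0:ℝ) < 1 + σ₁ * w ω := by nlinarith
      have hdb : (0:ℝ) < 1 + σ₂ * w ω := by nlinarith
      have : (w ω) ^ 2 / (1 + σ₂ * w ω) < (w ω) ^ 2 / (1 + σ₁ * w ω) := by
        apply div_lt_div_of_pos_left (by positivity) hda
        nlinarith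
      simp only [Function.mem_support, hd]
      intro h0
      rw [sub_eq_zero] at h0
      exact absurd h0 (ne_of_gt this)
    have hμpos : 0 < μ {ω | x₀ < w ω} := by
      by_contra h
      push_neg at h
      have h0 : μ {ω | x₀ < w ω} = 0 := le_antisymm h (zero_le)
      have := (hbd x₀ le_rfl).1
      rw [G, h0] at this
      simp at this
      nlinarith
    exact lt_of_lt_of_le hμpos (measure_mono hsub)
  have := integral_sub hint1 hint2
  rw [hd] at hpos
  rw [this] at hpos
  linarith

include hw_meas hw_nonneg htail in
lemma F_continuousAt (hC : 0 < C) {σ₀ : ℝ} (hσ₀ : 0 < σ₀) :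
    ContinuousAt (fun σ => ∫ ω, (w ω) ^ 2 / (1 + σ * w ω) ∂μ) σ₀ := by
  apply continuousAt_of_dominated (bound := fun ω => w ω / (σ₀ / 2))
  · exact Eventually.of_forall fun σ =>
      ((hw_meas.pow_const 2).div
        (measurable_const.add (measurable_const.mul hw_meas))).aestronglyMeasurable
  · filter_upwards [eventually_gt_nhds (half_lt_self hσ₀)] with σ hσ
    refine Eventually.of_forall fun ω => ?_
    have hσpos : 0 < σ := lt_trans (half_pos hσ₀) hσ
    rw [Real.norm_eq_abs, abs_of_nonneg (fs_nonneg w hw_nonneg σ hσpos.le ω)]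
    refine le_trans (fs_le w hw_nonneg hσpos ω) ?_
    rw [div_le_div_iff₀ hσpos (half_pos hσ₀)]
    exact mul_le_mul_of_nonneg_left hσ.le (hw_nonneg ω)
  · exact (integrable_w μ w htail hw_meas hw_nonneg hC).div_const _
  · refine Eventually.of_forall fun ω => ?_
    have h := hw_nonneg ω
    have : (0:ℝ) < 1 + σ₀ * w ω := by positivity
    exact ContinuousAt.div continuousAt_const
      (continuousAt_const.add (continuousAt_id.mul continuousAt_const)) (ne_of_gt this)

include hw_meas hw_nonneg in
lemma integrable_min {M : ℝ} (hM : 0 ≤ M) : Integrable (fun ω => min (w ω) M) μ := by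
  refine Integrable.mono' (integrable_const M)
    (hw_meas.min measurable_const).aestronglyMeasurable
    (Eventually.of_forall fun ω => ?_)
  rw [Real.norm_eq_abs, abs_of_nonneg (le_min (hw_nonneg ω) hM)]
  exact min_le_right _ _

include hw_meas hw_nonneg htail in
lemma R_bound (hC : 0 < C) :
    ∃ x₀ : ℝ, 1 ≤ x₀ ∧ ∀ M, x₀ ≤ M →
      (∫ ω, (w ω - min (w ω) M) ∂μ) ≤ 4 * C / M := by
  obtain ⟨x₀, hx₀1, hbd⟩ := G_upper μ w htail hC
  refine ⟨x₀, hx₀1, fun M hM => ?_⟩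
  have hMpos : (0:ℝ) < M := by linarith
  have hg_int : Integrable (fun ω => w ω - min (w ω) M) μ :=
    (integrable_w μ w htail hw_meas hw_nonneg hC).sub (integrable_min μ w hw_meas hw_nonneg hMpos.le)
  have hg_nonneg : ∀ ω, 0 ≤ w ω - min (w ω) M := fun ω => by
    simp [sub_nonneg, min_le_left]
  rw [hg_int.integral_eq_integral_meas_lt (Eventually.of_forall hg_nonneg)]
  have hset : ∀ t : ℝ, 0 < t → {a | t < w a - min (w a) M} = {a | M + t < w a} := by
    intro t ht
    ext a
    simp only [Set.mem_setOf_eq]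
    constructor
    · intro h
      rcases le_or_gt (w a) M with h'|h'
      · rw [min_eq_left h'] at h; linarith
      · rw [min_eq_right h'.le] at h; linarith
    · intro h
      have h' : M < w a := by linarith
      rw [min_eq_right h'.le]
      linarith
  have hcong : ∀ᵐ t ∂(volume.restrict (Set.Ioi (0:ℝ))),
      (μ {a | t < w a - min (w a) M}).toReal = G μ w (M + t) := by
    rw [ae_restrict_iff' measurableSet_Ioi]
    exact Eventually.of_forall fun t ht => by rw [hset t ht]; rfl
  simp only [measureReal_def]
  rw [integral_congr_ae hcong]
  -- dominate by piecewise function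
  set h : ℝ → ℝ := fun t => if t ≤ M then 2 * C / M ^ 2 else 2 * C * t ^ (-2:ℝ) with hh
  have hc1 : IntegrableOn (fun _ : ℝ => 2 * C / M ^ 2) (Set.Ioc 0 M) volume :=
    integrableOn_const measure_Ioc_lt_top.ne
  have h_int1 : IntegrableOn h (Set.Ioc 0 M) volume := by
    refine hc1.congr_fun (fun t ht => ?_) measurableSet_Ioc
    simp [hh, ht.2]
  have hc2 : IntegrableOn (fun t : ℝ => 2 * C * t ^ (-2:ℝ)) (Set.Ioi M) volume :=
    (integrableOn_Ioi_rpow_of_lt (by norm_num) hMpos).const_mul (2*C)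
  have h_int2 : IntegrableOn h (Set.Ioi M) volume := by
    refine hc2.congr_fun (fun t ht => ?_) measurableSet_Ioi
    simp only [Set.mem_Ioi] at ht
    simp [hh, not_le.mpr ht]
  have h_int : IntegrableOn h (Set.Ioi 0) volume := by
    rw [← Set.Ioc_union_Ioi_eq_Ioi hMpos.le]
    exact h_int1.union h_int2
  have hmono : ∫ t in Set.Ioi (0:ℝ), G μ w (M + t) ≤ ∫ t in Set.Ioi (0:ℝ), h t := by
    refine integral_mono_of_nonneg ?_ h_int ?_
    · exact Eventually.of_forall fun t => G_nonneg μ w _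
    · refine (ae_restrict_iff' measurableSet_Ioi).2 (Eventually.of_forall fun t ht => ?_)
      simp only [Set.mem_Ioi] at ht
      rcases le_or_gt t M with h'|h'
      · rw [hh]; simp only [if_pos h']
        calc G μ w (M + t) ≤ G μ w M := G_anti μ w (by linarith)
          _ ≤ 2 * C / M ^ 2 := hbd M hM
      · rw [hh]; simp only [if_neg (not_le.mpr h')]
        have htpos : 0 < t := lt_trans hMpos h'
        calc G μ w (M + t) ≤ G μ w t := G_anti μ w (by linarith)
          _ ≤ 2 * C / t ^ 2 := hbd t (by linarith)
          _ = 2 * C * t ^ (-2:ℝ) := by rw [rpow_neg_two htpos]; ring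
  have hval : ∫ t in Set.Ioi (0:ℝ), h t = 4 * C / M := by
    rw [← Set.Ioc_union_Ioi_eq_Ioi hMpos.le,
      setIntegral_union (Set.Ioc_disjoint_Ioi le_rfl) measurableSet_Ioi h_int1 h_int2]
    have hv1 : ∫ t in Set.Ioc (0:ℝ) M, h t = 2 * C / M := by
      rw [setIntegral_congr_fun (g := fun _ : ℝ => 2 * C / M ^ 2) measurableSet_Ioc
        (fun t ht => by simp [hh, ht.2])]
      rw [setIntegral_const, Real.volume_real_Ioc, smul_eq_mul, sub_zero,
        max_eq_left hMpos.le]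
      field_simp
    have hv2 : ∫ t in Set.Ioi M, h t = 2 * C / M := by
      rw [setIntegral_congr_fun (g := fun t : ℝ => 2 * C * t ^ (-2:ℝ)) measurableSet_Ioi
        (fun t ht => by simp [hh, not_le.mpr (Set.mem_Ioi.mp ht)])]
      rw [integral_const_mul, integral_Ioi_rpow_of_lt (by norm_num) hMpos]
      norm_num
      rw [Real.rpow_neg_one]
      field_simp
    rw [hv1, hv2]
    ring
  linarith

include hw_nonneg in
lemma pointwise_lower {σ M : ℝ} (hσ : 0 < σ) (hM : 0 < M) (ω : Ω) :
    (min (w ω) M) ^ 2 ≤ (1 + σ * M) * ((w ω) ^ 2 / (1 + σ * w ω)) := by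
  have h := hw_nonneg ω
  have hd : (0:ℝ) < 1 + σ * w ω := by positivity
  rw [mul_div_assoc', le_div_iff₀ hd]
  rcases le_or_gt (w ω) M with h'|h'
  · rw [min_eq_left h']
    have key : σ * (w ω * w ω) * w ω ≤ σ * (w ω * w ω) * M :=
      mul_le_mul_of_nonneg_left h' (by positivity)
    nlinarith [key]
  · rw [min_eq_right h'.le]
    have k1 : M * M ≤ w ω * w ω := mul_self_le_mul_self hM.le h'.le
    have k2 : σ * M * (M * w ω) ≤ σ * M * (w ω * w ω) :=
      mul_le_mul_of_nonneg_left (mul_le_mul_of_nonneg_right h'.le h) (by positivity)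
    nlinarith [k1, k2]

include hw_nonneg in
lemma pointwise_upper {σ : ℝ} (hσ : 0 < σ) (ω : Ω) :
    (w ω) ^ 2 / (1 + σ * w ω) ≤ (min (w ω) σ⁻¹) ^ 2 + σ⁻¹ * (w ω - min (w ω) σ⁻¹) := by
  have h := hw_nonneg ω
  rcases le_or_gt (w ω) σ⁻¹ with h'|h'
  · rw [min_eq_left h']
    have : (w ω) ^ 2 / (1 + σ * w ω) ≤ (w ω) ^ 2 := by
      apply div_le_self (by positivity)
      nlinarith
    linarith
  · rw [min_eq_right h'.le]
    have := fs_le w hw_nonneg hσ ω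
    have hrw : σ⁻¹ ^ 2 + σ⁻¹ * (w ω - σ⁻¹) = σ⁻¹ * w ω := by ring
    rw [hrw]
    calc (w ω) ^ 2 / (1 + σ * w ω) ≤ w ω / σ := this
      _ = σ⁻¹ * w ω := by rw [div_eq_inv_mul]

include hw_meas hw_nonneg htail in
lemma F_lower_bound (hC : 0 < C) {σ M : ℝ} (hσ : 0 < σ) (hM : 0 < M) :
    (∫ ω, (min (w ω) M) ^ 2 ∂μ) ≤ (1 + σ * M) * ∫ ω, (w ω) ^ 2 / (1 + σ * w ω) ∂μ := by
  rw [← integral_const_mul]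
  exact integral_mono (integrable_min_sq μ w hw_meas hw_nonneg hM.le)
    ((integrable_fs μ w htail hw_meas hw_nonneg hC hσ).const_mul _)
    (fun ω => pointwise_lower w hw_nonneg hσ hM ω)

include hw_meas hw_nonneg htail in
lemma F_upper_bound (hC : 0 < C) {σ : ℝ} (hσ : 0 < σ) :
    (∫ ω, (w ω) ^ 2 / (1 + σ * w ω) ∂μ) ≤
      (∫ ω, (min (w ω) σ⁻¹) ^ 2 ∂μ) + σ⁻¹ * ∫ ω, (w ω - min (w ω) σ⁻¹) ∂μ := by
  have hinv : (0:ℝ) < σ⁻¹ := by positivity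
  have h1 := integrable_min_sq μ w hw_meas hw_nonneg hinv.le
  have h2 : Integrable (fun ω => w ω - min (w ω) σ⁻¹) μ :=
    (integrable_w μ w htail hw_meas hw_nonneg hC).sub
      (integrable_min μ w hw_meas hw_nonneg hinv.le)
  calc (∫ ω, (w ω) ^ 2 / (1 + σ * w ω) ∂μ)
      ≤ ∫ ω, ((min (w ω) σ⁻¹) ^ 2 + σ⁻¹ * (w ω - min (w ω) σ⁻¹)) ∂μ :=
        integral_mono (integrable_fs μ w htail hw_meas hw_nonneg hC hσ)
          (h1.add (h2.const_mul _)) (fun ω => pointwise_upper w hw_nonneg hσ ω)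
    _ = _ := by rw [integral_add h1 (h2.const_mul _), integral_const_mul]

include hw_meas hw_nonneg htail in
lemma exists_unique_sigma (hC : 0 < C) {δ : ℝ} (hδ : 0 < δ) :
    ∃! σ : ℝ, 0 < σ ∧ δ * ∫ ω, (w ω) ^ 2 / (1 + σ * w ω) ∂μ = 1 := by
  set F : ℝ → ℝ := fun σ => ∫ ω, (w ω) ^ 2 / (1 + σ * w ω) ∂μ with hF
  have hEw : 0 ≤ ∫ ω, w ω ∂μ := integral_nonneg hw_nonneg
  set Ew := ∫ ω, w ω ∂μ with hEwdef
  -- upper endpoint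
  set σ₂ : ℝ := δ * Ew + 1 with hσ₂def
  have hσ₂pos : 0 < σ₂ := by positivity
  have hFσ₂ : F σ₂ < 1 / δ := by
    have hle : F σ₂ ≤ Ew / σ₂ := by
      have := integral_mono (integrable_fs μ w htail hw_meas hw_nonneg hC hσ₂pos)
        ((integrable_w μ w htail hw_meas hw_nonneg hC).div_const σ₂)
        (fun ω => fs_le w hw_nonneg hσ₂pos ω)
      rw [integral_div] at this
      exact this
    have : Ew / σ₂ < 1 / δ := by
      rw [div_lt_div_iff₀ hσ₂pos hδ]
      nlinarith
    linarith
  -- lower endpoint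
  obtain ⟨x₀, hx₀1, hTm⟩ := Tm_bounds μ w htail (half_pos hC)
  have hx₀pos : (0:ℝ) < x₀ := by linarith
  set A : ℝ := (2 / δ + 2) / C with hAdef
  have hApos : 0 < A := by positivity
  set M : ℝ := x₀ * Real.exp A with hMdef
  have hM : x₀ ≤ M := by
    nlinarith [Real.one_le_exp hApos.le]
  have hMpos : 0 < M := lt_of_lt_of_le hx₀pos hM
  have hlogM : Real.log M = Real.log x₀ + A := by
    rw [hMdef, Real.log_mul (ne_of_gt hx₀pos) (ne_of_gt (Real.exp_pos A)), Real.log_exp]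
  have hTmM : 2 / δ + 2 ≤ ∫ ω, (min (w ω) M) ^ 2 ∂μ := by
    have := (hTm M hM).1
    rw [Tm_eq μ w hw_meas hw_nonneg hMpos] 
    rw [hlogM] at this
    have harith : (C - C/2) * (2 * (Real.log x₀ + A) - 2 * Real.log x₀) = C * A := by ring
    rw [harith] at this
    rw [hAdef] at this
    rw [mul_div_cancel₀ _ (ne_of_gt hC)] at this
    linarith
  set σ₁ : ℝ := min M⁻¹ (σ₂ / 2) with hσ₁def
  have hσ₁pos : 0 < σ₁ := lt_min (by positivity) (by positivity)
  have hσ₁lt : σ₁ < σ₂ := lt_of_le_of_lt (min_le_right _ _) (by linarith)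
  have hFσ₁ : 1 / δ < F σ₁ := by
    have hub := F_lower_bound μ w htail hw_meas hw_nonneg hC hσ₁pos hMpos
    have hσ₁M : σ₁ * M ≤ 1 := by
      have : σ₁ ≤ M⁻¹ := min_le_left _ _
      calc σ₁ * M ≤ M⁻¹ * M := mul_le_mul_of_nonneg_right this hMpos.le
        _ = 1 := inv_mul_cancel₀ (ne_of_gt hMpos)
    have hFnonneg : 0 ≤ F σ₁ := integral_nonneg (fun ω => fs_nonneg w hw_nonneg _ hσ₁pos.le ω)
    have h2F : 2 / δ + 2 ≤ 2 * F σ₁ := by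
      calc 2 / δ + 2 ≤ ∫ ω, (min (w ω) M) ^ 2 ∂μ := hTmM
        _ ≤ (1 + σ₁ * M) * F σ₁ := hub
        _ ≤ 2 * F σ₁ := mul_le_mul_of_nonneg_right (by linarith) hFnonneg
    have h2d : 2 / δ = 2 * (1 / δ) := by ring
    linarith
  -- IVT
  have hcont : ContinuousOn F (Set.Icc σ₁ σ₂) := fun σ hσ =>
    (F_continuousAt μ w htail hw_meas hw_nonneg hC
      (lt_of_lt_of_le hσ₁pos hσ.1)).continuousWithinAt
  have hmem : 1 / δ ∈ Set.Icc (F σ₂) (F σ₁) := ⟨hFσ₂.le, hFσ₁.le⟩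
  obtain ⟨σ, hσmem, hFσ⟩ := intermediate_value_Icc' hσ₁lt.le hcont hmem
  have hσpos : 0 < σ := lt_of_lt_of_le hσ₁pos hσmem.1
  have hδF : δ * F σ = 1 := by rw [hFσ]; field_simp
  refine ⟨σ, ?_, ?_⟩
  · exact ⟨hσpos, hδF⟩
  · rintro σ' ⟨hσ'pos, hσ'eq⟩
    have hFσ' : F σ' = F σ := by
      have h1 : F σ' = 1 / δ := by
        rw [eq_div_iff hδ.ne', mul_comm]
        exact hσ'eq
      rw [h1, hFσ]
    rcases lt_trichotomy σ' σ with h|h|h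
    · exfalso
      have hlt : F σ < F σ' := F_strict_anti μ w htail hw_meas hw_nonneg hC hσ'pos h
      linarith [hlt, hFσ'.le, hFσ'.ge]
    · exact h
    · exfalso
      have hlt : F σ' < F σ := F_strict_anti μ w htail hw_meas hw_nonneg hC hσpos h
      linarith [hlt, hFσ'.le, hFσ'.ge]

omit [IsProbabilityMeasure μ] in
lemma aux_div_log (c1 c2 : ℝ) :
    Tendsto (fun M : ℝ => (c1 + c2 * Real.log M) / Real.log M) atTop (𝓝 c2) := by
  have hinv : Tendsto (fun M : ℝ => (Real.log M)⁻¹) atTop (𝓝 0) :=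
    Real.tendsto_log_atTop.inv_tendsto_atTop
  have h : Tendsto (fun M : ℝ => c1 * (Real.log M)⁻¹ + c2) atTop (𝓝 (c1 * 0 + c2)) :=
    (hinv.const_mul c1).add tendsto_const_nhds
  rw [mul_zero, zero_add] at h
  apply h.congr'
  filter_upwards [eventually_gt_atTop (1:ℝ)] with M hM
  have hlog : 0 < Real.log M := Real.log_pos hM
  field_simp

include hw_meas hw_nonneg htail in
lemma tendsto_Tm (hC : 0 < C) :
    Tendsto (fun M => (∫ ω, (min (w ω) M) ^ 2 ∂μ) / Real.log M) atTop (𝓝 (2*C)) := by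
  rw [tendsto_order]
  constructor
  · intro a ha
    set ε := min ((2*C - a)/4) (C/2) with hεdef
    have hεpos : 0 < ε := lt_min (by linarith) (by linarith)
    have hεC : ε ≤ C/2 := min_le_right _ _
    have hεa : a < 2*(C-ε) := by
      have h1 := min_le_left ((2*C - a)/4) (C/2)
      have h2 : ε ≤ (2*C - a)/4 := h1
      linarith
    obtain ⟨x₀, hx₀1, hb⟩ := Tm_bounds μ w htail hεpos
    have hx₀pos : (0:ℝ) < x₀ := by linarith
    have hφ : Tendsto (fun M : ℝ => (C-ε)*(2*Real.log M - 2*Real.log x₀)/Real.log M)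
        atTop (𝓝 (2*(C-ε))) := by
      have := aux_div_log (-(2*(C-ε)*Real.log x₀)) (2*(C-ε))
      apply this.congr
      intro M
      ring_nf
    have hev := hφ.eventually (eventually_gt_nhds hεa)
    filter_upwards [hev, eventually_ge_atTop x₀, eventually_gt_atTop (1:ℝ)] with M h1 h2 h3
    have hlog : 0 < Real.log M := Real.log_pos h3
    have hMpos : (0:ℝ) < M := by linarith
    have hlow := (hb M h2).1
    rw [← Tm_eq μ w hw_meas hw_nonneg hMpos] at hlow
    calc a < (C-ε)*(2*Real.log M - 2*Real.log x₀)/Real.log M := h1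
      _ ≤ (∫ ω, (min (w ω) M) ^ 2 ∂μ) / Real.log M := by
          exact (div_le_div_iff_of_pos_right hlog).mpr hlow
  · intro a ha
    set ε := (a - 2*C)/4 with hεdef
    have hεpos : 0 < ε := by linarith
    have hεa : 2*(C+ε) < a := by linarith
    obtain ⟨x₀, hx₀1, hb⟩ := Tm_bounds μ w htail hεpos
    have hx₀pos : (0:ℝ) < x₀ := by linarith
    have hψ : Tendsto (fun M : ℝ => (x₀^2 + (C+ε)*(2*Real.log M - 2*Real.log x₀))/Real.log M)
        atTop (𝓝 (2*(C+ε))) := by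
      have := aux_div_log (x₀^2 - 2*(C+ε)*Real.log x₀) (2*(C+ε))
      apply this.congr
      intro M
      ring_nf
    have hev := hψ.eventually (eventually_lt_nhds hεa)
    filter_upwards [hev, eventually_ge_atTop x₀, eventually_gt_atTop (1:ℝ)] with M h1 h2 h3
    have hlog : 0 < Real.log M := Real.log_pos h3
    have hMpos : (0:ℝ) < M := by linarith
    have hup := (hb M h2).2
    rw [← Tm_eq μ w hw_meas hw_nonneg hMpos] at hup
    calc (∫ ω, (min (w ω) M) ^ 2 ∂μ) / Real.log M
        ≤ (x₀^2 + (C+ε)*(2*Real.log M - 2*Real.log x₀))/Real.log M := by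
          exact (div_le_div_iff_of_pos_right hlog).mpr hup
      _ < a := h1

include hw_meas hw_nonneg htail in
lemma tendsto_F (hC : 0 < C) :
    Tendsto (fun σ => (∫ ω, (w ω) ^ 2 / (1 + σ * w ω) ∂μ) / Real.log σ⁻¹)
      (𝓝[>] (0:ℝ)) (𝓝 (2*C)) := by
  have hinvtop : Tendsto (fun σ : ℝ => σ⁻¹) (𝓝[>] (0:ℝ)) atTop := tendsto_inv_nhdsGT_zero
  have hlogtop : Tendsto (fun σ : ℝ => Real.log σ⁻¹) (𝓝[>] (0:ℝ)) atTop :=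
    Real.tendsto_log_atTop.comp hinvtop
  have hpos_ev : ∀ᶠ σ in 𝓝[>] (0:ℝ), 0 < σ := by
    filter_upwards [self_mem_nhdsWithin] with σ hσ
    exact hσ
  have hsmall : ∀ c : ℝ, 0 < c → ∀ᶠ σ in 𝓝[>] (0:ℝ), σ < c := fun c hc =>
    (eventually_lt_nhds hc).filter_mono nhdsWithin_le_nhds
  rw [tendsto_order]
  constructor
  · intro a ha
    obtain ⟨ε, hεpos, hεa⟩ : ∃ ε : ℝ, 0 < ε ∧ a * (1+ε) < 2*C := by
      rcases le_or_gt a 0 with h|h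
      · exact ⟨1, one_pos, by nlinarith⟩
      · refine ⟨(2*C - a)/(2*a), div_pos (by linarith) (by linarith), ?_⟩
        have harith : a * (1 + (2*C - a)/(2*a)) = a/2 + C := by field_simp; ring
        rw [harith]; linarith
    have hMtop : Tendsto (fun σ : ℝ => ε * σ⁻¹) (𝓝[>] (0:ℝ)) atTop :=
      Tendsto.const_mul_atTop hεpos hinvtop
    have hTmcomp : Tendsto
        (fun σ : ℝ => (∫ ω, (min (w ω) (ε * σ⁻¹)) ^ 2 ∂μ) / Real.log (ε * σ⁻¹))
        (𝓝[>] (0:ℝ)) (𝓝 (2*C)) :=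
      (tendsto_Tm μ w htail hw_meas hw_nonneg hC).comp hMtop
    have hlogcomp : Tendsto (fun σ : ℝ => Real.log (ε * σ⁻¹)) (𝓝[>] (0:ℝ)) atTop :=
      Real.tendsto_log_atTop.comp hMtop
    have hratio : Tendsto (fun σ : ℝ => Real.log (ε * σ⁻¹) / Real.log σ⁻¹)
        (𝓝[>] (0:ℝ)) (𝓝 1) := by
      have h0 : Tendsto (fun σ : ℝ => Real.log ε / Real.log σ⁻¹ + 1)
          (𝓝[>] (0:ℝ)) (𝓝 (0+1)) :=
        (tendsto_const_nhds.div_atTop hlogtop).add tendsto_const_nhds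
      rw [zero_add] at h0
      apply h0.congr'
      filter_upwards [hpos_ev, hlogtop.eventually_gt_atTop 0] with σ hσ hlog
      rw [Real.log_mul (ne_of_gt hεpos) (by positivity)]
      rw [add_div, div_self (ne_of_gt hlog)]
    have hL : Tendsto (fun σ : ℝ => (∫ ω, (min (w ω) (ε * σ⁻¹)) ^ 2 ∂μ) / Real.log σ⁻¹)
        (𝓝[>] (0:ℝ)) (𝓝 (2*C)) := by
      have hmul := hTmcomp.mul hratio
      rw [mul_one] at hmul
      apply hmul.congr'
      filter_upwards [hlogcomp.eventually_gt_atTop 0] with σ h1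
      exact div_mul_div_cancel₀ (ne_of_gt h1)
    have hev := hL.eventually (eventually_gt_nhds hεa)
    filter_upwards [hev, hpos_ev, hlogtop.eventually_gt_atTop 0] with σ h1 hσ hlog
    have hMpos : 0 < ε * σ⁻¹ := by positivity
    have hlb := F_lower_bound μ w htail hw_meas hw_nonneg hC hσ hMpos
    have hσM : σ * (ε * σ⁻¹) = ε := by field_simp
    rw [hσM] at hlb
    rw [lt_div_iff₀ hlog]
    have h1' : a * (1+ε) * Real.log σ⁻¹ < ∫ ω, (min (w ω) (ε * σ⁻¹)) ^ 2 ∂μ := by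
      have := (lt_div_iff₀ hlog).mp h1
      linarith
    have hstep : a * (1+ε) * Real.log σ⁻¹ <
        (1+ε) * ∫ ω, (w ω) ^ 2 / (1 + σ * w ω) ∂μ := lt_of_lt_of_le h1' hlb
    have hfin : (1+ε) * (a * Real.log σ⁻¹) <
        (1+ε) * ∫ ω, (w ω) ^ 2 / (1 + σ * w ω) ∂μ := by
      calc (1+ε) * (a * Real.log σ⁻¹) = a * (1+ε) * Real.log σ⁻¹ := by ring
        _ < _ := hstep
    exact lt_of_mul_lt_mul_left hfin (by linarith)
  · intro a ha
    obtain ⟨x₁, hx₁1, hR⟩ := R_bound μ w htail hw_meas hw_nonneg hC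
    have hx₁pos : (0:ℝ) < x₁ := by linarith
    have hTmcomp : Tendsto (fun σ : ℝ => (∫ ω, (min (w ω) σ⁻¹) ^ 2 ∂μ) / Real.log σ⁻¹)
        (𝓝[>] (0:ℝ)) (𝓝 (2*C)) :=
      (tendsto_Tm μ w htail hw_meas hw_nonneg hC).comp hinvtop
    have h4C : Tendsto (fun σ : ℝ => 4*C / Real.log σ⁻¹) (𝓝[>] (0:ℝ)) (𝓝 0) :=
      tendsto_const_nhds.div_atTop hlogtop
    have hsum := hTmcomp.add h4C
    rw [add_zero] at hsum
    have hev := hsum.eventually (eventually_lt_nhds ha)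
    filter_upwards [hev, hpos_ev, hsmall x₁⁻¹ (by positivity),
      hlogtop.eventually_gt_atTop 0] with σ h1 hσ hx hlog
    have hx' : x₁ < σ⁻¹ := by
      rw [← one_div, lt_div_iff₀ hσ]
      calc x₁ * σ < x₁ * x₁⁻¹ := mul_lt_mul_of_pos_left hx hx₁pos
        _ = 1 := mul_inv_cancel₀ (ne_of_gt hx₁pos)
    have hub := F_upper_bound μ w htail hw_meas hw_nonneg hC hσ
    have hRb := hR σ⁻¹ hx'.le
    have hσR : σ⁻¹ * (∫ ω, (w ω - min (w ω) σ⁻¹) ∂μ) ≤ 4*C := by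
      calc σ⁻¹ * (∫ ω, (w ω - min (w ω) σ⁻¹) ∂μ) ≤ σ⁻¹ * (4*C/σ⁻¹) :=
            mul_le_mul_of_nonneg_left hRb (by positivity)
        _ = 4*C := by field_simp
    rw [div_lt_iff₀ hlog]
    have h1' : (∫ ω, (min (w ω) σ⁻¹) ^ 2 ∂μ) + 4*C < a * Real.log σ⁻¹ := by
      have := (div_lt_iff₀ hlog).mp (by rw [add_div]; exact h1 :
        ((∫ ω, (min (w ω) σ⁻¹) ^ 2 ∂μ) + 4*C) / Real.log σ⁻¹ < a)
      exact this
    linarith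

end Tail

end CritExp

open CritExp

/-- Let `w ≥ 0` with tail `P(w > x) ~ C x^{-2}`, `C > 0`
(tail exponent `α = 3`). Then for every `δ > 0` there is a unique `σ(δ) > 0` with
`δ·E[w²/(1+σ(δ)w)] = 1`, and `δ·log σ(δ) → −1/(2C)` as `δ → 0⁺`. -/
theorem critical_exponent_alpha_three
    {Ω : Type*} [MeasurableSpace Ω] (μ : Measure Ω) [IsProbabilityMeasure μ]
    (w : Ω → ℝ) (hw_meas : Measurable w) (hw_nonneg : ∀ ω, 0 ≤ w ω)
    (C : ℝ) (hC : 0 < C)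
    (htail : Tendsto (fun x : ℝ => x ^ 2 * (μ {ω | x < w ω}).toReal)
      atTop (𝓝 C)) :
    (∀ δ : ℝ, 0 < δ →
      ∃! σ : ℝ, 0 < σ ∧ δ * ∫ ω, (w ω) ^ 2 / (1 + σ * w ω) ∂μ = 1) ∧
    ∀ sf : ℝ → ℝ,
      (∀ δ : ℝ, 0 < δ →
        0 < sf δ ∧ δ * ∫ ω, (w ω) ^ 2 / (1 + sf δ * w ω) ∂μ = 1) →
      Tendsto (fun δ : ℝ => δ * Real.log (sf δ)) (𝓝[>] 0)
        (𝓝 (-1 / (2 * C))) := by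
  constructor
  · intro δ hδ
    exact exists_unique_sigma μ w htail hw_meas hw_nonneg hC hδ
  · intro sf hsf
    have hB := tendsto_F μ w htail hw_meas hw_nonneg hC
    have hsf_pos : ∀ᶠ δ in 𝓝[>] (0:ℝ), 0 < sf δ := by
      filter_upwards [self_mem_nhdsWithin] with δ hδ
      exact (hsf δ hδ).1
    have hFsf : ∀ δ : ℝ, 0 < δ →
        (∫ ω, (w ω) ^ 2 / (1 + sf δ * w ω) ∂μ) = 1/δ := by
      intro δ hδ
      rw [eq_div_iff (ne_of_gt hδ), mul_comm]
      exact (hsf δ hδ).2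
    have hsf_tendsto : Tendsto sf (𝓝[>] (0:ℝ)) (𝓝[>] (0:ℝ)) := by
      rw [tendsto_nhdsWithin_iff]
      refine ⟨?_, by filter_upwards [hsf_pos] with δ h using h⟩
      rw [tendsto_order]
      constructor
      · intro b hb
        filter_upwards [hsf_pos] with δ hδ
        linarith
      · intro b hb
        set Fb : ℝ := ∫ ω, (w ω) ^ 2 / (1 + b * w ω) ∂μ with hFbdef
        have hFb0 : 0 ≤ Fb := integral_nonneg (fun ω => fs_nonneg w hw_nonneg b hb.le ω)
        have hδ₀ : (0:ℝ) < (Fb + 1)⁻¹ := by positivity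
        filter_upwards [self_mem_nhdsWithin,
          (eventually_lt_nhds hδ₀).filter_mono nhdsWithin_le_nhds] with δ hδpos hδlt
        simp only [Set.mem_Ioi] at hδpos
        by_contra hge
        push_neg at hge
        have hanti : (∫ ω, (w ω) ^ 2 / (1 + sf δ * w ω) ∂μ) ≤ Fb := by
          rcases eq_or_lt_of_le hge with h|h
          · rw [hFbdef, ← h]
          · exact (F_strict_anti μ w htail hw_meas hw_nonneg hC hb h).le
        have h1δ : 1/δ ≤ Fb := by
          rw [← hFsf δ hδpos]
          exact hanti
        have hbig : Fb + 1 < 1/δ := by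
          rw [lt_div_iff₀ hδpos]
          calc (Fb + 1) * δ < (Fb + 1) * (Fb + 1)⁻¹ :=
                mul_lt_mul_of_pos_left hδlt (by positivity)
            _ = 1 := mul_inv_cancel₀ (by positivity)
        linarith
    have hcomp := hB.comp hsf_tendsto
    have hg : Tendsto (fun δ => (1/δ) / Real.log (sf δ)⁻¹) (𝓝[>] (0:ℝ)) (𝓝 (2*C)) := by
      apply hcomp.congr'
      filter_upwards [self_mem_nhdsWithin] with δ hδ
      simp only [Set.mem_Ioi] at hδ
      simp only [Function.comp]
      rw [hFsf δ hδ]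
    have hginv : Tendsto (fun δ => ((1/δ) / Real.log (sf δ)⁻¹)⁻¹) (𝓝[>] (0:ℝ))
        (𝓝 ((2*C)⁻¹)) := hg.inv₀ (by positivity)
    have hdl : Tendsto (fun δ => δ * Real.log (sf δ)⁻¹) (𝓝[>] (0:ℝ)) (𝓝 ((2*C)⁻¹)) := by
      apply hginv.congr
      intro δ
      rw [inv_div, div_div_eq_mul_div, div_one, mul_comm]
    have hneg := hdl.neg
    rw [show -((2*C)⁻¹) = -1/(2*C) by rw [neg_div, one_div]] at hneg
    apply hneg.congr
    intro δ
    rw [Real.log_inv]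
    ring
end

section
/- Let w be a nonnegative real random variable with P(w > 0) > 0 and E[w³] < ∞. Set λ_c = 1/E[w²]. Then for every δ > 0 there is a unique σ(λ_c+δ) > 0 with (λ_c+δ)·E[w²/(1+σ(λ_c+δ)w)] = 1, and lim_{δ→0⁺} σ(λ_c+δ)/δ = 1/(λ_c² E[w³]). -/
open MeasureTheory Filter Real
open scoped Topology

section Aux

variable {Ω : Type*} [MeasurableSpace Ω] {μ : Measure Ω} [IsProbabilityMeasure μ]
  {w : Ω → ℝ}

lemma aux_int_pow (hw_meas : Measurable w) (hw_nonneg : ∀ ω, 0 ≤ w ω)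
    (hw3_int : Integrable (fun ω => (w ω) ^ 3) μ) (n : ℕ) (hn : n ≤ 3) :
    Integrable (fun ω => (w ω) ^ n) μ := by
  refine Integrable.mono' ((integrable_const (1:ℝ)).add hw3_int)
    ((hw_meas.pow_const n).aestronglyMeasurable) (Eventually.of_forall fun ω => ?_)
  have h0 := hw_nonneg ω
  rw [Real.norm_eq_abs, abs_of_nonneg (pow_nonneg h0 n)]
  simp only [Pi.add_apply]
  rcases le_or_gt (w ω) 1 with h | h
  · have : w ω ^ n ≤ 1 := pow_le_one₀ h0 h
    nlinarith [pow_nonneg h0 3]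
  · have : w ω ^ n ≤ w ω ^ 3 := pow_le_pow_right₀ h.le hn
    linarith
  
lemma aux_int_div (hw_meas : Measurable w) (hw_nonneg : ∀ ω, 0 ≤ w ω)
    (hw3_int : Integrable (fun ω => (w ω) ^ 3) μ) (n : ℕ) (hn : n ≤ 3)
    {σ : ℝ} (hσ : 0 ≤ σ) :
    Integrable (fun ω => (w ω) ^ n / (1 + σ * w ω)) μ := by
  refine Integrable.mono' (aux_int_pow hw_meas hw_nonneg hw3_int n hn)
    ?_ (Eventually.of_forall fun ω => ?_)
  · exact ((hw_meas.pow_const n).div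
      (measurable_const.add (measurable_const.mul hw_meas))).aestronglyMeasurable
  · have h0 := hw_nonneg ω
    have hden : (1:ℝ) ≤ 1 + σ * w ω := by nlinarith
    rw [Real.norm_eq_abs, abs_of_nonneg (div_nonneg (pow_nonneg h0 n) (by linarith))]
    exact div_le_self (pow_nonneg h0 n) hden

lemma aux_pos_div (hw_meas : Measurable w) (hw_nonneg : ∀ ω, 0 ≤ w ω)
    (hw_pos : 0 < μ {ω | 0 < w ω})
    (hw3_int : Integrable (fun ω => (w ω) ^ 3) μ) (n : ℕ) (hn0 : n ≠ 0) (hn : n ≤ 3)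
    {σ : ℝ} (hσ : 0 ≤ σ) :
    0 < ∫ ω, (w ω) ^ n / (1 + σ * w ω) ∂μ := by
  have hnn : ∀ ω, 0 ≤ (w ω) ^ n / (1 + σ * w ω) := fun ω =>
    div_nonneg (pow_nonneg (hw_nonneg ω) n) (by nlinarith [hw_nonneg ω])
  rw [integral_pos_iff_support_of_nonneg hnn (aux_int_div hw_meas hw_nonneg hw3_int n hn hσ)]
  refine lt_of_lt_of_le hw_pos (measure_mono fun ω hω => ?_)
  have hw : 0 < w ω := hω
  have hden : (0:ℝ) < 1 + σ * w ω := by nlinarith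
  exact ne_of_gt (div_pos (pow_pos hw n) hden)

lemma aux_pos_pow (hw_meas : Measurable w) (hw_nonneg : ∀ ω, 0 ≤ w ω)
    (hw_pos : 0 < μ {ω | 0 < w ω})
    (hw3_int : Integrable (fun ω => (w ω) ^ 3) μ) (n : ℕ) (hn0 : n ≠ 0) (hn : n ≤ 3) :
    0 < ∫ ω, (w ω) ^ n ∂μ := by
  have := aux_pos_div hw_meas hw_nonneg hw_pos hw3_int n hn0 hn (le_refl 0)
  simpa using this

lemma aux_contOn (hw_meas : Measurable w) (hw_nonneg : ∀ ω, 0 ≤ w ω)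
    (hw3_int : Integrable (fun ω => (w ω) ^ 3) μ) (n : ℕ) (hn : n ≤ 3) :
    ContinuousOn (fun σ => ∫ ω, (w ω) ^ n / (1 + σ * w ω) ∂μ) (Set.Ici (0:ℝ)) := by
  intro x hx
  refine continuousWithinAt_of_dominated ?_ ?_ (aux_int_pow hw_meas hw_nonneg hw3_int n hn) ?_
  · filter_upwards [self_mem_nhdsWithin] with σ hσ
    exact ((hw_meas.pow_const n).div
      (measurable_const.add (measurable_const.mul hw_meas))).aestronglyMeasurable
  · filter_upwards [self_mem_nhdsWithin] with σ hσ
    refine Eventually.of_forall fun ω => ?_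
    have h0 := hw_nonneg ω
    have hσ' : (0:ℝ) ≤ σ := hσ
    have hden : (1:ℝ) ≤ 1 + σ * w ω := by nlinarith
    rw [Real.norm_eq_abs, abs_of_nonneg (div_nonneg (pow_nonneg h0 n) (by linarith))]
    exact div_le_self (pow_nonneg h0 n) hden
  · refine Eventually.of_forall fun ω => ?_
    have h0 := hw_nonneg ω
    have hx' : (0:ℝ) ≤ x := hx
    have hden : (1:ℝ) ≤ 1 + x * w ω := by nlinarith
    refine ContinuousAt.continuousWithinAt (ContinuousAt.div continuousAt_const
      ((continuous_const.add (continuous_mul_right (w ω))).continuousAt) ?_)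
    show (1:ℝ) + x * w ω ≠ 0
    linarith

lemma aux_strictAnti (hw_meas : Measurable w) (hw_nonneg : ∀ ω, 0 ≤ w ω)
    (hw_pos : 0 < μ {ω | 0 < w ω})
    (hw3_int : Integrable (fun ω => (w ω) ^ 3) μ)
    {a b : ℝ} (ha : 0 ≤ a) (hab : a < b) :
    ∫ ω, (w ω) ^ 2 / (1 + b * w ω) ∂μ < ∫ ω, (w ω) ^ 2 / (1 + a * w ω) ∂μ := by
  have hb : 0 ≤ b := le_trans ha hab.le
  have hia := aux_int_div hw_meas hw_nonneg hw3_int 2 (by norm_num) ha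
  have hib := aux_int_div hw_meas hw_nonneg hw3_int 2 (by norm_num) hb
  rw [← sub_pos, ← integral_sub hia hib]
  have hnn : ∀ ω, 0 ≤ (w ω) ^ 2 / (1 + a * w ω) - (w ω) ^ 2 / (1 + b * w ω) := by
    intro ω
    have h0 := hw_nonneg ω
    have hda : (0:ℝ) < 1 + a * w ω := by nlinarith
    have hdb : (0:ℝ) < 1 + b * w ω := by nlinarith
    have : (w ω) ^ 2 / (1 + b * w ω) ≤ (w ω) ^ 2 / (1 + a * w ω) := by
      gcongr
    linarith
  rw [integral_pos_iff_support_of_nonneg hnn (hia.sub hib)]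
  refine lt_of_lt_of_le hw_pos (measure_mono fun ω hω => ?_)
  have hw : 0 < w ω := hω
  have hda : (0:ℝ) < 1 + a * w ω := by nlinarith
  have hdb : (0:ℝ) < 1 + b * w ω := by nlinarith
  have hlt : (w ω) ^ 2 / (1 + b * w ω) < (w ω) ^ 2 / (1 + a * w ω) := by
    apply div_lt_div_of_pos_left (by positivity) hda
    nlinarith
  simp only [Function.mem_support]
  intro hcon
  rw [sub_eq_zero] at hcon
  exact absurd hcon (ne_of_gt hlt)

lemma aux_identity (hw_meas : Measurable w) (hw_nonneg : ∀ ω, 0 ≤ w ω)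
    (hw3_int : Integrable (fun ω => (w ω) ^ 3) μ) {σ : ℝ} (hσ : 0 ≤ σ) :
    (∫ ω, (w ω) ^ 2 ∂μ) - ∫ ω, (w ω) ^ 2 / (1 + σ * w ω) ∂μ
      = σ * ∫ ω, (w ω) ^ 3 / (1 + σ * w ω) ∂μ := by
  rw [← integral_sub (aux_int_pow hw_meas hw_nonneg hw3_int 2 (by norm_num))
    (aux_int_div hw_meas hw_nonneg hw3_int 2 (by norm_num) hσ), ← integral_const_mul]
  refine integral_congr_ae (Eventually.of_forall fun ω => ?_)
  have h0 := hw_nonneg ω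
  have hne : (1:ℝ) + σ * w ω ≠ 0 := by nlinarith
  field_simp
  ring

end Aux

/-- Let `w ≥ 0` with `P(w > 0) > 0` and `E[w³] < ∞`, and set
`λ_c = 1/E[w²]`. Then for every `δ > 0` there is a unique `σ(λ_c+δ) > 0` with
`(λ_c+δ)·E[w²/(1+σ(λ_c+δ)w)] = 1`, and `σ(λ_c+δ)/δ → 1/(λ_c²E[w³])` as
`δ → 0⁺`. -/
theorem critical_exponent_finite_third_moment
    {Ω : Type*} [MeasurableSpace Ω] (μ : Measure Ω) [IsProbabilityMeasure μ]
    (w : Ω → ℝ) (hw_meas : Measurable w) (hw_nonneg : ∀ ω, 0 ≤ w ω)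
    (hw_pos : 0 < μ {ω | 0 < w ω})
    (hw3_int : Integrable (fun ω => (w ω) ^ 3) μ)
    (lamc : ℝ) (hlamc : lamc = 1 / ∫ ω, (w ω) ^ 2 ∂μ) :
    (∀ δ : ℝ, 0 < δ →
      ∃! σ : ℝ, 0 < σ ∧ (lamc + δ) * ∫ ω, (w ω) ^ 2 / (1 + σ * w ω) ∂μ = 1) ∧
    ∀ sf : ℝ → ℝ,
      (∀ δ : ℝ, 0 < δ →
        0 < sf δ ∧ (lamc + δ) * ∫ ω, (w ω) ^ 2 / (1 + sf δ * w ω) ∂μ = 1) →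
      Tendsto (fun δ : ℝ => sf δ / δ) (𝓝[>] 0)
        (𝓝 (1 / (lamc ^ 2 * ∫ ω, (w ω) ^ 3 ∂μ))) := by
  have hI2pos : 0 < ∫ ω, (w ω) ^ 2 ∂μ :=
    aux_pos_pow hw_meas hw_nonneg hw_pos hw3_int 2 (by norm_num) (by norm_num)
  have hI3pos : 0 < ∫ ω, (w ω) ^ 3 ∂μ :=
    aux_pos_pow hw_meas hw_nonneg hw_pos hw3_int 3 (by norm_num) (by norm_num)
  set I2 := ∫ ω, (w ω) ^ 2 ∂μ with hI2def
  set I3 := ∫ ω, (w ω) ^ 3 ∂μ with hI3def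
  set F : ℝ → ℝ := fun s => ∫ ω, (w ω) ^ 2 / (1 + s * w ω) ∂μ with hFdef
  set G : ℝ → ℝ := fun s => ∫ ω, (w ω) ^ 3 / (1 + s * w ω) ∂μ with hGdef
  have hlc : 0 < lamc := by rw [hlamc]; positivity
  have hI2lc : I2 = 1 / lamc := by rw [hlamc, one_div_one_div]
  have hF0 : F 0 = I2 := by simp [hFdef, hI2def]
  have hG0 : G 0 = I3 := by simp [hGdef, hI3def]
  have hFanti : ∀ {a b : ℝ}, 0 ≤ a → a ≤ b → F b ≤ F a := by
    intro a b ha hab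
    rcases eq_or_lt_of_le hab with rfl | h
    · exact le_refl _
    · exact (aux_strictAnti hw_meas hw_nonneg hw_pos hw3_int ha h).le
  constructor
  · -- existence and uniqueness
    intro δ hδ
    have hlcδ : 0 < lamc + δ := by linarith
    have ht_pos : 0 < 1 / (lamc + δ) := by positivity
    have ht_lt : 1 / (lamc + δ) < I2 := by
      rw [hI2lc]
      exact one_div_lt_one_div_of_lt hlc (by linarith)
    -- upper bound for F at large σ
    set E1 := ∫ ω, (w ω) ^ 1 ∂μ with hE1def
    have hE1nn : 0 ≤ E1 := integral_nonneg fun ω => pow_nonneg (hw_nonneg ω) 1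
    set M := (lamc + δ) * E1 + 1 with hMdef
    have hMpos : 0 < M := by positivity
    have hFM : F M < 1 / (lamc + δ) := by
      have hbound : F M ≤ E1 / M := by
        rw [hFdef, hE1def, div_eq_mul_inv, ← integral_mul_const]
        refine integral_mono (aux_int_div hw_meas hw_nonneg hw3_int 2 (by norm_num) hMpos.le)
          (((aux_int_pow hw_meas hw_nonneg hw3_int 1 (by norm_num))).mul_const _) fun ω => ?_
        have h0 := hw_nonneg ω
        rcases eq_or_lt_of_le h0 with h | h
        · simp [← h]
        · have hden : (0:ℝ) < 1 + M * w ω := by nlinarith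
          rw [div_le_iff₀ hden, pow_one, mul_comm (w ω) M⁻¹, mul_assoc,
            ← div_eq_inv_mul]
          rw [le_div_iff₀ hMpos]
          nlinarith
      refine lt_of_le_of_lt hbound ?_
      rw [div_lt_div_iff₀ hMpos hlcδ]
      nlinarith
    have hIVT := intermediate_value_Icc' hMpos.le
      ((aux_contOn hw_meas hw_nonneg hw3_int 2 (by norm_num)).mono
        (fun x hx => hx.1 : Set.Icc (0:ℝ) M ⊆ Set.Ici 0))
    have hmem : 1 / (lamc + δ) ∈ Set.Icc (F M) (F 0) := ⟨hFM.le, by rw [hF0]; exact ht_lt.le⟩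
    obtain ⟨σ, hσmem, hσeq0⟩ := hIVT hmem
    have hσeq : F σ = 1 / (lamc + δ) := hσeq0
    have hσpos : 0 < σ := by
      rcases eq_or_lt_of_le hσmem.1 with h | h
      · exfalso
        rw [← h, hF0] at hσeq
        rw [hσeq] at ht_lt
        exact lt_irrefl _ ht_lt
      · exact h
    refine ⟨σ, ⟨hσpos, ?_⟩, ?_⟩
    · show (lamc + δ) * F σ = 1
      rw [hσeq]; field_simp
    · rintro y ⟨hy_pos, hy_eq⟩
      have hFy : F y = 1 / (lamc + δ) := by
        have : (lamc + δ) * F y = 1 := hy_eq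
        field_simp at this ⊢
        linarith
      have hFσ' : F σ = F y := by rw [hσeq, hFy]
      by_contra hne
      rcases lt_trichotomy y σ with h | h | h
      · exact absurd hFσ'.symm
          (ne_of_gt (aux_strictAnti hw_meas hw_nonneg hw_pos hw3_int hy_pos.le h))
      · exact hne h
      · exact absurd hFσ'
          (ne_of_gt (aux_strictAnti hw_meas hw_nonneg hw_pos hw3_int hσpos.le h))
  · -- the limit
    intro sf hsf
    have hFeq : ∀ δ : ℝ, 0 < δ → F (sf δ) = 1 / (lamc + δ) := by
      intro δ hδ
      have h := (hsf δ hδ).2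
      have hlcδ : lamc + δ ≠ 0 := by positivity
      rw [eq_div_iff hlcδ, mul_comm]; exact h
    -- sf tends to 0 within (0,∞)
    have htend_inv : Tendsto (fun δ : ℝ => 1 / (lamc + δ)) (𝓝[>] (0:ℝ)) (𝓝 (1 / lamc)) := by
      have : ContinuousAt (fun δ : ℝ => 1 / (lamc + δ)) 0 := by
        refine ContinuousAt.div continuousAt_const
          ((continuous_const.add continuous_id).continuousAt) ?_
        show lamc + 0 ≠ 0
        simpa using hlc.ne'
      simpa using this.tendsto.mono_left nhdsWithin_le_nhds
    have hsf0 : Tendsto sf (𝓝[>] (0:ℝ)) (𝓝 0) := by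
      rw [tendsto_order]
      constructor
      · intro a ha
        filter_upwards [self_mem_nhdsWithin] with δ hδ
        exact lt_trans ha ((hsf δ hδ).1)
      · intro ε hε
        have hFε : F ε < 1 / lamc := by
          rw [← hI2lc, ← hF0]
          exact aux_strictAnti hw_meas hw_nonneg hw_pos hw3_int (le_refl 0) hε
        filter_upwards [self_mem_nhdsWithin, htend_inv.eventually (eventually_gt_nhds hFε)]
          with δ hδ hgt
        by_contra hcon
        push_neg at hcon
        have : F (sf δ) ≤ F ε := hFanti hε.le hcon
        rw [hFeq δ hδ] at this
        linarith
    have hsf0' : Tendsto sf (𝓝[>] (0:ℝ)) (𝓝[Set.Ici 0] 0) := by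
      rw [tendsto_nhdsWithin_iff]
      refine ⟨hsf0, ?_⟩
      filter_upwards [self_mem_nhdsWithin] with δ hδ
      exact (hsf δ hδ).1.le
    have hGtend : Tendsto (fun δ => G (sf δ)) (𝓝[>] (0:ℝ)) (𝓝 I3) := by
      have hc : ContinuousWithinAt G (Set.Ici 0) 0 :=
        aux_contOn hw_meas hw_nonneg hw3_int 3 (by norm_num) 0 Set.self_mem_Ici
      have := hc.tendsto.comp hsf0'
      rwa [hG0] at this
    have hlatend : Tendsto (fun δ : ℝ => lamc + δ) (𝓝[>] (0:ℝ)) (𝓝 lamc) := by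
      have h : Tendsto (fun δ : ℝ => lamc + δ) (𝓝 (0:ℝ)) (𝓝 (lamc + 0)) :=
        (continuous_const.add continuous_id).tendsto 0
      rw [add_zero] at h
      exact h.mono_left nhdsWithin_le_nhds
    have hprod : Tendsto (fun δ : ℝ => lamc * ((lamc + δ) * G (sf δ))) (𝓝[>] (0:ℝ))
        (𝓝 (lamc * (lamc * I3))) := tendsto_const_nhds.mul (hlatend.mul hGtend)
    have hne : lamc * (lamc * I3) ≠ 0 := by positivity
    have hinv := hprod.inv₀ hne
    have hval : (lamc * (lamc * I3))⁻¹ = 1 / (lamc ^ 2 * I3) := by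
      rw [one_div]; congr 1; ring
    rw [← hval]
    refine hinv.congr' ?_
    filter_upwards [self_mem_nhdsWithin] with δ hδ
    have hδpos : (0:ℝ) < δ := hδ
    have hσpos : 0 < sf δ := (hsf δ hδpos).1
    have hGpos : 0 < G (sf δ) :=
      aux_pos_div hw_meas hw_nonneg hw_pos hw3_int 3 (by norm_num) (by norm_num) hσpos.le
    have hid := aux_identity hw_meas hw_nonneg hw3_int hσpos.le
    have hid' : I2 - 1 / (lamc + δ) = sf δ * G (sf δ) := by
      rw [← hFeq δ hδpos]; exact hid
    have hlcδ : (0:ℝ) < lamc + δ := by linarith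
    have key : sf δ * G (sf δ) * (lamc * (lamc + δ)) = δ := by
      rw [← hid', hI2lc]
      field_simp
      ring
    have hXne : lamc * ((lamc + δ) * G (sf δ)) ≠ 0 := by positivity
    rw [eq_div_iff (ne_of_gt hδpos), inv_mul_eq_div, div_eq_iff hXne]
    linear_combination -key
end

section
/- Let n ≥ 1, let w₁, …, wₙ be positive real numbers, and let λ > 0, σ > 0 satisfy (λ/n)·Σ_{j=1}^n w_j²/(1+σw_j) = 1. Set ρᵢ = 1/(1+σwᵢ) and let Ā be the n×n matrix with entries Ā_{ij} = (λ wᵢ w_j/n)ρ_j for i ≠ j and Ā_{ii} = −1/ρᵢ + (λ wᵢ²/n)ρᵢ. Then (λ/n)·Σ_{i=1}^n wᵢ² ρᵢ² < 1, and every eigenvalue of Ā is real and at most (λ/n)·Σ_{i=1}^n wᵢ² ρᵢ² − 1 < 0. -/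
open Finset

/-- Let `n ≥ 1`, `w₁,…,wₙ > 0`, `λ > 0`, `σ > 0` with
`(λ/n)·Σⱼ wⱼ²/(1+σwⱼ) = 1`. With `ρᵢ = 1/(1+σwᵢ)` and `Ā` the matrix with
`Ā_{ij} = (λwᵢwⱼ/n)ρⱼ` for `i ≠ j` and `Ā_{ii} = −1/ρᵢ + (λwᵢ²/n)ρᵢ`, one has
`(λ/n)·Σᵢ wᵢ²ρᵢ² < 1`, and every eigenvalue of `Ā` is real and at most
`(λ/n)·Σᵢ wᵢ²ρᵢ² − 1 < 0`. -/
theorem conditioned_mean_matrix_eigenvalues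
    (n : ℕ) (hn : 1 ≤ n) (lam σ : ℝ) (hlam : 0 < lam) (hσ : 0 < σ)
    (w : Fin n → ℝ) (hw : ∀ i, 0 < w i)
    (hσeq : lam / n * ∑ j, (w j) ^ 2 / (1 + σ * w j) = 1)
    (ρ : Fin n → ℝ) (hρ : ∀ i, ρ i = 1 / (1 + σ * w i))
    (A : Matrix (Fin n) (Fin n) ℝ)
    (hA : ∀ i j, A i j =
      if i = j then -1 / ρ i + lam * (w i) ^ 2 / n * ρ i
      else lam * w i * w j / n * ρ j) :
    lam / n * ∑ i, (w i) ^ 2 * (ρ i) ^ 2 < 1 ∧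
    ∀ μ : ℂ, μ ∈ spectrum ℂ (A.map (algebraMap ℝ ℂ)) →
      μ.im = 0 ∧ μ.re ≤ lam / n * ∑ i, (w i) ^ 2 * (ρ i) ^ 2 - 1 := by
  have hnpos : (0:ℝ) < n := by exact_mod_cast Nat.lt_of_lt_of_le Nat.zero_lt_one hn
  have hcoef : 0 < lam / n := div_pos hlam hnpos
  have hden : ∀ i, (0:ℝ) < 1 + σ * w i := fun i => by
    have := mul_pos hσ (hw i); linarith
  have hρpos : ∀ i, 0 < ρ i := fun i => by
    rw [hρ i]; exact one_div_pos.mpr (hden i)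
  have hρlt1 : ∀ i, ρ i < 1 := fun i => by
    rw [hρ i]
    rw [div_lt_one (hden i)]
    nlinarith [mul_pos hσ (hw i)]
  have hne : Nonempty (Fin n) := ⟨⟨0, hn⟩⟩
  have hsum_lt : (∑ i, (w i) ^ 2 * (ρ i) ^ 2) < ∑ j, (w j) ^ 2 / (1 + σ * w j) := by
    apply Finset.sum_lt_sum_of_nonempty Finset.univ_nonempty
    intro i _
    have h1 : w i ^ 2 * ρ i ^ 2 = (w i ^ 2 / (1 + σ * w i)) * ρ i := by
      rw [hρ i]; field_simp
    have h2 : 0 < w i ^ 2 / (1 + σ * w i) := div_pos (pow_pos (hw i) 2) (hden i)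
    nlinarith [hρlt1 i, hρpos i]
  have hs1 : lam / n * ∑ i, (w i) ^ 2 * (ρ i) ^ 2 < 1 := by
    calc lam / n * ∑ i, (w i) ^ 2 * (ρ i) ^ 2
        < lam / n * ∑ j, (w j) ^ 2 / (1 + σ * w j) :=
          mul_lt_mul_of_pos_left hsum_lt hcoef
      _ = 1 := hσeq
  refine ⟨hs1, ?_⟩
  intro μ hμ
  set M := A.map (algebraMap ℝ ℂ) with hM
  rw [spectrum.mem_iff] at hμ
  rw [Matrix.isUnit_iff_isUnit_det, isUnit_iff_ne_zero, not_ne_iff] at hμ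
  obtain ⟨x, hx0, hx⟩ := Matrix.exists_mulVec_eq_zero_iff.mpr hμ
  -- turn into eigen equation
  have hxeig : M.mulVec x = μ • x := by
    have h1 : (algebraMap ℂ (Matrix (Fin n) (Fin n) ℂ)) μ - M = μ • 1 - M := by
      congr 1
      simp [Algebra.algebraMap_eq_smul_one]
    rw [h1, Matrix.sub_mulVec, Matrix.smul_mulVec, Matrix.one_mulVec, sub_eq_zero] at hx
    exact hx.symm
  -- componentwise
  set S : ℂ := ∑ j, ((w j * ρ j : ℝ) : ℂ) * x j with hS
  have hEig : ∀ i, ((lam * w i / n : ℝ) : ℂ) * S - ((1 / ρ i : ℝ) : ℂ) * x i = μ * x i := by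
    intro i
    have h0 := congrFun hxeig i
    have hmv : M.mulVec x i = ∑ j, ((A i j : ℝ) : ℂ) * x j := by
      simp [Matrix.mulVec, hM, Matrix.map_apply, dotProduct]
    have hsplit : ∀ j, ((A i j : ℝ) : ℂ) * x j
        = ((lam * w i / n : ℝ) : ℂ) * (((w j * ρ j : ℝ) : ℂ) * x j)
          - (if j = i then ((1 / ρ i : ℝ) : ℂ) * x i else 0) := by
      intro j
      rw [hA]
      by_cases h : i = j
      · subst h
        simp only [if_pos rfl]
        have : ρ i ≠ 0 := ne_of_gt (hρpos i)
        push_cast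
        field_simp
        ring
      · rw [if_neg h, if_neg (Ne.symm h)]
        push_cast
        ring
    rw [hmv] at h0
    rw [Finset.sum_congr rfl (fun j _ => hsplit j)] at h0
    rw [Finset.sum_sub_distrib, Finset.sum_ite_eq' Finset.univ i
      (fun _ => ((1 / ρ i : ℝ) : ℂ) * x i), if_pos (Finset.mem_univ i),
      ← Finset.mul_sum] at h0
    simpa only [Pi.smul_apply, smul_eq_mul] using h0
  -- multiply by ρ i * conj x i and sum
  set P : ℝ := ∑ i, ρ i * Complex.normSq (x i) with hP
  set Q : ℝ := ∑ i, Complex.normSq (x i) with hQ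
  have hkey : ((lam / n : ℝ) : ℂ) * (Complex.normSq S : ℂ) = μ * (P : ℝ) + (Q : ℝ) := by
    have hmain : ∀ i, ((lam / n : ℝ) : ℂ) * (((w i * ρ i : ℝ) : ℂ) * (starRingEnd ℂ) (x i)) * S
        = μ * (((ρ i : ℝ) : ℂ) * (Complex.normSq (x i) : ℂ)) + (Complex.normSq (x i) : ℂ) := by
      intro i
      have h1 := hEig i
      have h2 : ((ρ i : ℝ) : ℂ) * (starRingEnd ℂ) (x i) *
          (((lam * w i / n : ℝ) : ℂ) * S - ((1 / ρ i : ℝ) : ℂ) * x i)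
          = ((ρ i : ℝ) : ℂ) * (starRingEnd ℂ) (x i) * (μ * x i) := by rw [h1]
      have hρne : ((ρ i : ℝ) : ℂ) ≠ 0 := by
        exact_mod_cast ne_of_gt (hρpos i)
      have hconj : (starRingEnd ℂ) (x i) * x i = (Complex.normSq (x i) : ℂ) := by
        rw [mul_comm, Complex.mul_conj]
      calc ((lam / n : ℝ) : ℂ) * (((w i * ρ i : ℝ) : ℂ) * (starRingEnd ℂ) (x i)) * S
          = ((ρ i : ℝ) : ℂ) * (starRingEnd ℂ) (x i) * (((lam * w i / n : ℝ) : ℂ) * S)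
            := by push_cast; ring
        _ = ((ρ i : ℝ) : ℂ) * (starRingEnd ℂ) (x i) * (((1 / ρ i : ℝ) : ℂ) * x i)
            + ((ρ i : ℝ) : ℂ) * (starRingEnd ℂ) (x i) * (μ * x i) := by
              rw [← h2]; ring
        _ = (starRingEnd ℂ) (x i) * x i
            + μ * (((ρ i : ℝ) : ℂ) * ((starRingEnd ℂ) (x i) * x i)) := by
              push_cast
              field_simp
        _ = μ * (((ρ i : ℝ) : ℂ) * (Complex.normSq (x i) : ℂ)) + (Complex.normSq (x i) : ℂ)
            := by rw [hconj]; ring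
    have hsum := Finset.sum_congr rfl (fun i (_ : i ∈ Finset.univ) => hmain i)
    have hL : ∑ i, ((lam / n : ℝ) : ℂ) * (((w i * ρ i : ℝ) : ℂ) * (starRingEnd ℂ) (x i)) * S
        = ((lam / n : ℝ) : ℂ) * (Complex.normSq S : ℂ) := by
      rw [← Finset.sum_mul, ← Finset.mul_sum, mul_assoc]
      congr 1
      have hconjS : (starRingEnd ℂ) S = ∑ j, ((w j * ρ j : ℝ) : ℂ) * (starRingEnd ℂ) (x j) := by
        rw [hS, map_sum]
        exact Finset.sum_congr rfl (fun j _ => by rw [map_mul, Complex.conj_ofReal])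
      rw [← hconjS, mul_comm, Complex.mul_conj]
    have hR : ∑ i, (μ * (((ρ i : ℝ) : ℂ) * (Complex.normSq (x i) : ℂ)) + (Complex.normSq (x i) : ℂ))
        = μ * (P : ℝ) + (Q : ℝ) := by
      rw [Finset.sum_add_distrib, ← Finset.mul_sum, hP, hQ]
      push_cast
      ring
    rw [← hL, hsum, hR]
  -- positivity facts
  obtain ⟨i₀, hi₀⟩ := Function.ne_iff.mp hx0
  have hPpos : 0 < P := by
    apply Finset.sum_pos'
    · intro i _; exact mul_nonneg (le_of_lt (hρpos i)) (Complex.normSq_nonneg _)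
    · exact ⟨i₀, Finset.mem_univ i₀,
        mul_pos (hρpos i₀) (Complex.normSq_pos.mpr hi₀)⟩
  have hPQ : P ≤ Q := by
    apply Finset.sum_le_sum
    intro i _
    nlinarith [Complex.normSq_nonneg (x i), hρlt1 i]
  -- extract real and imaginary parts
  have him : μ.im * P = 0 := by
    have := congrArg Complex.im hkey
    simpa [Complex.add_im, Complex.mul_im] using this.symm
  have himz : μ.im = 0 := by
    rcases mul_eq_zero.mp him with h | h
    · exact h
    · exact absurd h (ne_of_gt hPpos)
  have hre : lam / n * Complex.normSq S = μ.re * P + Q := by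
    have := congrArg Complex.re hkey
    simpa [Complex.add_re, Complex.mul_re, himz] using this
  -- Cauchy-Schwarz bound
  have hCS : Complex.normSq S ≤ (∑ i, (w i) ^ 2 * (ρ i) ^ 2) * Q := by
    have h1 : ‖S‖ ≤ ∑ j, w j * ρ j * ‖x j‖ := by
      calc ‖S‖ ≤ ∑ j, ‖((w j * ρ j : ℝ) : ℂ) * x j‖ := by
            exact norm_sum_le _ _
        _ = ∑ j, w j * ρ j * ‖x j‖ := by
            apply Finset.sum_congr rfl
            intro j _
            rw [norm_mul, Complex.norm_real, Real.norm_eq_abs, abs_of_pos (mul_pos (hw j) (hρpos j))]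
    have h2 : (∑ j, w j * ρ j * ‖x j‖) ^ 2
        ≤ (∑ j, (w j * ρ j) ^ 2) * ∑ j, ‖x j‖ ^ 2 :=
      Finset.sum_mul_sq_le_sq_mul_sq _ _ _
    have h3 : Complex.normSq S = ‖S‖ ^ 2 := Complex.normSq_eq_norm_sq S
    have h4 : (∑ j, ‖x j‖ ^ 2) = Q := by
      rw [hQ]
      exact Finset.sum_congr rfl (fun j _ => (Complex.normSq_eq_norm_sq (x j)).symm)
    have h5 : ‖S‖ ^ 2 ≤ (∑ j, w j * ρ j * ‖x j‖) ^ 2 := by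
      apply pow_le_pow_left₀ (norm_nonneg S) h1
    calc Complex.normSq S = ‖S‖ ^ 2 := h3
      _ ≤ (∑ j, w j * ρ j * ‖x j‖) ^ 2 := h5
      _ ≤ (∑ j, (w j * ρ j) ^ 2) * ∑ j, ‖x j‖ ^ 2 := h2
      _ = (∑ i, (w i) ^ 2 * (ρ i) ^ 2) * Q := by
          rw [h4]; congr 1; exact Finset.sum_congr rfl (fun j _ => by ring)
  refine ⟨himz, ?_⟩
  -- final arithmetic
  set s := lam / n * ∑ i, (w i) ^ 2 * (ρ i) ^ 2 with hs
  have hQnn : 0 ≤ Q := le_trans (le_of_lt hPpos) hPQ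
  have h6 : lam / n * Complex.normSq S ≤ s * Q := by
    rw [hs, mul_assoc]
    exact mul_le_mul_of_nonneg_left hCS (le_of_lt hcoef)
  have h7 : μ.re * P ≤ (s - 1) * Q := by nlinarith
  have h8 : (s - 1) * Q ≤ (s - 1) * P := by nlinarith
  have : μ.re * P ≤ (s - 1) * P := le_trans h7 h8
  have := le_of_mul_le_mul_right (by linarith : μ.re * P ≤ (s-1) * P) hPpos
  linarith
end
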